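/- The transformations T_{(G,F)} generate an equivalence relation directly: the relation on pairs (v,w) of even power series in R[[t]] with zero constant coefficient defined by (v,w) ∼ (v',w') iff (v',w') = T_{(G,F)}(v,w) for some pair (G,F) with G odd and F ∈ H odd, is reflexive (via (G,F) = (0,t)), symmetric, and transitive. In particular each T_{(G,F)} maps pairs of even power series with zero constant coefficient to pairs of even power series with zero constant coefficient. -/

import Mathlib

open PowerSeries

variable {R : Type*} [CommRing R]

/-- Substitution of the power series `G` (with zero constant coefficient) into `F`. -/
noncomputable def PowerSeries.comp (F G : R⟦X⟧) : R⟦X⟧ :=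
  PowerSeries.mk fun n => ∑ k ∈ Finset.range (n + 1), coeff k F * coeff n (G ^ k)

/-- A power series is even if all its odd-degree coefficients vanish. -/
def PowerSeries.IsEven (F : R⟦X⟧) : Prop := ∀ n : ℕ, Odd n → coeff n F = 0

/-- A power series is odd if all its even-degree coefficients vanish. -/
def PowerSeries.IsOdd (F : R⟦X⟧) : Prop := ∀ n : ℕ, Even n → coeff n F = 0

/-- Membership in the group `H`: zero constant coefficient and unit coefficient of `t`. -/
def PowerSeries.InH (F : R⟦X⟧) : Prop :=
  constantCoeff F = 0 ∧ IsUnit (coeff 1 F)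

/-- For `v = ∑_{i≥1} v_i t^{2i}`, this is `v⟨F⟩ := ∑_{i≥1} v_i F^{2i-1}`. -/
noncomputable def PowerSeries.substOddPow (v F : R⟦X⟧) : R⟦X⟧ :=
  PowerSeries.mk fun n =>
    ∑ i ∈ Finset.range (n + 1), coeff (2 * (i + 1)) v * coeff n (F ^ (2 * (i + 1) - 1))

/-- The action `T_{(G,F)}` of a unital `A_∞`-isomorphism on the pair `(v,w)` of
characteristic power series of an odd Moore algebra. -/
noncomputable def MooreAct (G F : R⟦X⟧) (p : R⟦X⟧ × R⟦X⟧) : R⟦X⟧ × R⟦X⟧ :=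
  (2 * PowerSeries.X * G + PowerSeries.X * PowerSeries.substOddPow p.1 F,
    -(G * PowerSeries.substOddPow p.1 F) + PowerSeries.comp p.2 F - G ^ 2)

/-- `p` is a pair of even power series with zero constant coefficient. -/
def GoodPair (p : R⟦X⟧ × R⟦X⟧) : Prop :=
  p.1.IsEven ∧ constantCoeff p.1 = 0 ∧ p.2.IsEven ∧ constantCoeff p.2 = 0

/-- The relation `(v,w) ∼ (v',w')` iff `(v',w') = T_{(G,F)}(v,w)` for some `G` odd and
`F ∈ H` odd. -/
def MooreRel (p q : R⟦X⟧ × R⟦X⟧) : Prop :=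
  ∃ G F : R⟦X⟧, G.IsOdd ∧ F.IsOdd ∧ F.InH ∧ q = MooreAct G F p

open Finset

lemma coeff_comp (F G : R⟦X⟧) (n : ℕ) :
    coeff n (F.comp G) = ∑ k ∈ Finset.range (n + 1), coeff k F * coeff n (G ^ k) :=
  coeff_mk n _

lemma coeff_pow_of_lt {F : R⟦X⟧} (hF : constantCoeff F = 0) {n k : ℕ} (h : n < k) :
    coeff n (F ^ k) = 0 := by
  have hdvd : (X : R⟦X⟧) ^ k ∣ F ^ k := pow_dvd_pow_of_dvd (X_dvd_iff.mpr hF) k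
  exact (X_pow_dvd_iff.mp hdvd) n h

lemma coeff_pow_self {F : R⟦X⟧} (hF : constantCoeff F = 0) (n : ℕ) :
    coeff n (F ^ n) = (coeff 1 F) ^ n := by
  obtain ⟨U, hU⟩ := X_dvd_iff.mpr hF
  have h1 : coeff 1 F = constantCoeff U := by
    rw [hU, ← coeff_zero_eq_constantCoeff_apply]
    exact coeff_succ_X_mul 0 U
  have : coeff n (F ^ n) = constantCoeff (U ^ n) := by
    rw [hU, mul_pow, ← coeff_zero_eq_constantCoeff_apply]
    simpa using coeff_X_pow_mul (U ^ n) n 0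
  rw [this, map_pow, h1]

lemma sum_coeff_ext {G : R⟦X⟧} (hG : constantCoeff G = 0) (f : ℕ → R) {n M : ℕ} (h : n < M) :
    ∑ k ∈ range (n + 1), f k * coeff n (G ^ k) = ∑ k ∈ range M, f k * coeff n (G ^ k) := by
  apply Finset.sum_subset (by exact Finset.range_subset_range.mpr h)
  intro x _ hx
  rw [coeff_pow_of_lt hG (by simpa using Finset.mem_range.not.mp hx), mul_zero]

lemma coeff_eval₂ {G : R⟦X⟧} (hG : constantCoeff G = 0) (P : Polynomial R) (n : ℕ) :
    coeff n (P.eval₂ C G) = ∑ k ∈ range (n + 1), P.coeff k * coeff n (G ^ k) := by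
  rw [Polynomial.eval₂_eq_sum_range, map_sum]
  simp only [coeff_C_mul]
  rw [sum_coeff_ext hG _ (Nat.lt_succ_of_le (le_max_right P.natDegree n))]
  apply Finset.sum_subset (Finset.range_subset_range.mpr (Nat.succ_le_succ (le_max_left _ _)))
  intro x _ hx
  rw [Polynomial.coeff_eq_zero_of_natDegree_lt (by simpa using Finset.mem_range.not.mp hx),
    zero_mul]

lemma comp_add (a b G : R⟦X⟧) : (a + b).comp G = a.comp G + b.comp G := by
  ext n
  simp only [coeff_comp, map_add, add_mul, Finset.sum_add_distrib]

lemma comp_neg (a G : R⟦X⟧) : (-a).comp G = -(a.comp G) := by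
  ext n
  simp only [coeff_comp, map_neg, neg_mul, Finset.sum_neg_distrib]

lemma comp_sub (a b G : R⟦X⟧) : (a - b).comp G = a.comp G - b.comp G := by
  rw [sub_eq_add_neg, comp_add, comp_neg, sub_eq_add_neg]

lemma comp_C (r : R) (G : R⟦X⟧) : (C r).comp G = C r := by
  ext n
  rw [coeff_comp, Finset.sum_eq_single 0]
  · simp [coeff_C]
  · intro k _ hk
    rw [coeff_C, if_neg hk, zero_mul]
  · intro h; exact absurd (Finset.mem_range.mpr (Nat.succ_pos n)) h

lemma comp_one (G : R⟦X⟧) : (1 : R⟦X⟧).comp G = 1 := by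
  rw [← map_one (C (R := R)), comp_C, map_one]

lemma comp_X_right (F : R⟦X⟧) : F.comp X = F := by
  ext n
  rw [coeff_comp, Finset.sum_eq_single n]
  · rw [coeff_X_pow, if_pos rfl, mul_one]
  · intro k _ hk
    rw [coeff_X_pow, if_neg (Ne.symm hk), mul_zero]
  · intro h; exact absurd (Finset.self_mem_range_succ n) h

lemma X_comp {G : R⟦X⟧} (hG : constantCoeff G = 0) : (X : R⟦X⟧).comp G = G := by
  ext n
  rw [coeff_comp]
  rcases n with _ | m
  · simpa [coeff_X] using hG.symm
  · rw [Finset.sum_eq_single 1]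
    · rw [coeff_X, if_pos rfl, one_mul, pow_one]
    · intro k _ hk
      rw [coeff_X, if_neg hk, zero_mul]
    · intro h
      exact absurd (Finset.mem_range.mpr (by omega)) h

lemma coeff_comp_eval₂ {G : R⟦X⟧} (hG : constantCoeff G = 0) (F : R⟦X⟧) {n m : ℕ}
    (h : n < m) :
    coeff n (F.comp G) = coeff n ((trunc m F).eval₂ C G) := by
  rw [coeff_eval₂ hG, coeff_comp]
  apply Finset.sum_congr rfl
  intro k hk
  rw [coeff_trunc, if_pos (lt_of_lt_of_le (Finset.mem_range.mp hk) h)]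

lemma comp_mul {G : R⟦X⟧} (hG : constantCoeff G = 0) (a b : R⟦X⟧) :
    (a * b).comp G = a.comp G * b.comp G := by
  ext n
  rw [coeff_comp_eval₂ hG (a * b) (Nat.lt_succ_self n), PowerSeries.coeff_mul]
  have h1 : ∀ p ∈ antidiagonal n,
      coeff p.1 (a.comp G) * coeff p.2 (b.comp G) =
        coeff p.1 ((trunc (n + 1) a).eval₂ C G) *
          coeff p.2 ((trunc (n + 1) b).eval₂ C G) := by
    rintro ⟨i, j⟩ hij
    rw [Finset.HasAntidiagonal.mem_antidiagonal] at hij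
    rw [coeff_comp_eval₂ hG a (by omega : i < n + 1),
      coeff_comp_eval₂ hG b (by omega : j < n + 1)]
  rw [Finset.sum_congr rfl h1, ← PowerSeries.coeff_mul, ← Polynomial.eval₂_mul,
    coeff_eval₂ hG, coeff_eval₂ hG]
  apply Finset.sum_congr rfl
  intro k hk
  have hkn : k < n + 1 := Finset.mem_range.mp hk
  congr 1
  rw [coeff_trunc, if_pos hkn, Polynomial.coeff_mul, PowerSeries.coeff_mul]
  apply Finset.sum_congr rfl
  rintro ⟨i, j⟩ hij
  rw [Finset.HasAntidiagonal.mem_antidiagonal] at hij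
  rw [coeff_trunc, coeff_trunc, if_pos (by omega), if_pos (by omega)]

lemma comp_pow {G : R⟦X⟧} (hG : constantCoeff G = 0) (F : R⟦X⟧) (k : ℕ) :
    (F ^ k).comp G = (F.comp G) ^ k := by
  induction k with
  | zero => simpa using comp_one G
  | succ m ih => rw [pow_succ, comp_mul hG, ih, pow_succ]

lemma eval₂_comp {F F' : R⟦X⟧} (hF' : constantCoeff F' = 0) (P : Polynomial R) :
    (P.eval₂ C F).comp F' = P.eval₂ C (F.comp F') := by
  induction P using Polynomial.induction_on' with
  | add p q hp hq => rw [Polynomial.eval₂_add, Polynomial.eval₂_add, comp_add, hp, hq]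
  | monomial k a =>
    rw [Polynomial.eval₂_monomial, Polynomial.eval₂_monomial, comp_mul hF', comp_C,
      comp_pow hF']

lemma constantCoeff_comp (F G : R⟦X⟧) : constantCoeff (F.comp G) = constantCoeff F := by
  rw [← coeff_zero_eq_constantCoeff_apply, ← coeff_zero_eq_constantCoeff_apply, coeff_comp]
  simp

lemma coeff_one_comp (F G : R⟦X⟧) : coeff 1 (F.comp G) = coeff 1 F * coeff 1 G := by
  rw [coeff_comp, Finset.sum_range_succ, Finset.sum_range_one]
  simp [coeff_one]

lemma comp_assoc {F F' : R⟦X⟧} (hF : constantCoeff F = 0) (hF' : constantCoeff F' = 0)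
    (a : R⟦X⟧) : (a.comp F).comp F' = a.comp (F.comp F') := by
  have hFF' : constantCoeff (F.comp F') = 0 := by rw [constantCoeff_comp, hF]
  ext n
  rw [show coeff n ((a.comp F).comp F') =
      ∑ k ∈ range (n + 1), coeff k (a.comp F) * coeff n (F' ^ k) from coeff_comp _ _ n,
    coeff_comp_eval₂ hFF' a (Nat.lt_succ_self n), ← eval₂_comp hF', coeff_comp]
  apply Finset.sum_congr rfl
  intro k hk
  rw [coeff_comp_eval₂ hF a (Finset.mem_range.mp hk)]

lemma coeff_substOddPow (v F : R⟦X⟧) (n : ℕ) :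
    coeff n (v.substOddPow F) =
      ∑ i ∈ Finset.range (n + 1), coeff (2 * i + 2) v * coeff n (F ^ (2 * i + 1)) := by
  rw [PowerSeries.substOddPow, coeff_mk]
  apply Finset.sum_congr rfl
  intro i _
  rw [show 2 * (i + 1) = 2 * i + 2 by ring, show 2 * i + 2 - 1 = 2 * i + 1 by omega]

lemma isOdd_zero : (0 : R⟦X⟧).IsOdd := fun n _ => map_zero _

lemma isOdd_X : (X : R⟦X⟧).IsOdd := by
  intro n hn
  rw [coeff_X, if_neg]
  rintro rfl
  simp at hn

lemma PowerSeries.IsEven.add {a b : R⟦X⟧} (ha : a.IsEven) (hb : b.IsEven) : (a + b).IsEven :=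
  fun n hn => by rw [map_add, ha n hn, hb n hn, add_zero]

lemma PowerSeries.IsEven.neg {a : R⟦X⟧} (ha : a.IsEven) : (-a).IsEven :=
  fun n hn => by rw [map_neg, ha n hn, neg_zero]

lemma PowerSeries.IsEven.sub {a b : R⟦X⟧} (ha : a.IsEven) (hb : b.IsEven) : (a - b).IsEven := by
  rw [sub_eq_add_neg]; exact ha.add hb.neg

lemma PowerSeries.IsOdd.neg {a : R⟦X⟧} (ha : a.IsOdd) : (-a).IsOdd :=
  fun n hn => by rw [map_neg, ha n hn, neg_zero]

lemma PowerSeries.IsOdd.mul_even {F G : R⟦X⟧} (hF : F.IsOdd) (hG : G.IsOdd) : (F * G).IsEven := by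
  intro n hn
  rw [PowerSeries.coeff_mul]
  apply Finset.sum_eq_zero
  rintro ⟨i, j⟩ hij
  rw [Finset.HasAntidiagonal.mem_antidiagonal] at hij
  rcases Nat.even_or_odd i with h | h
  · rw [hF i h, zero_mul]
  · have hj : Even j := by
      rw [Nat.even_iff]; rw [Nat.odd_iff] at h hn; omega
    rw [hG j hj, mul_zero]

lemma PowerSeries.IsOdd.sq_even {G : R⟦X⟧} (hG : G.IsOdd) : (G ^ 2).IsEven := by
  rw [pow_two]; exact hG.mul_even hG

lemma coeff_pow_odd_zero {F : R⟦X⟧} (hF : F.IsOdd) :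
    ∀ (k n : ℕ), Odd (n + k) → coeff n (F ^ k) = 0 := by
  intro k
  induction k with
  | zero =>
    intro n hn
    rw [pow_zero, coeff_one, if_neg]
    · rintro rfl; simp at hn
  | succ m ih =>
    intro n hn
    rw [pow_succ, PowerSeries.coeff_mul]
    apply Finset.sum_eq_zero
    rintro ⟨i, j⟩ hij
    rw [Finset.HasAntidiagonal.mem_antidiagonal] at hij
    rcases Nat.even_or_odd (i + m) with h | h
    · have hj : Even j := by
        rw [Nat.even_iff]; rw [Nat.even_iff] at h; rw [Nat.odd_iff] at hn; omega
      rw [hF j hj, mul_zero]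
    · rw [ih i h, zero_mul]

lemma comp_even {h F : R⟦X⟧} (hh : h.IsEven) (hF : F.IsOdd) : (h.comp F).IsEven := by
  intro n hn
  rw [coeff_comp]
  apply Finset.sum_eq_zero
  intro k _
  rcases Nat.even_or_odd k with hk | hk
  · have hodd : Odd (n + k) := by
      rw [Nat.odd_iff]
      rw [Nat.even_iff] at hk
      rw [Nat.odd_iff] at hn
      omega
    rw [coeff_pow_odd_zero hF k n hodd, mul_zero]
  · rw [hh k hk, zero_mul]

lemma comp_odd {h F : R⟦X⟧} (hh : h.IsOdd) (hF : F.IsOdd) : (h.comp F).IsOdd := by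
  intro n hn
  rw [coeff_comp]
  apply Finset.sum_eq_zero
  intro k _
  rcases Nat.even_or_odd k with hk | hk
  · rw [hh k hk, zero_mul]
  · have hodd : Odd (n + k) := by
      rw [Nat.odd_iff]
      rw [Nat.odd_iff] at hk
      rw [Nat.even_iff] at hn
      omega
    rw [coeff_pow_odd_zero hF k n hodd, mul_zero]

lemma substOddPow_isOdd {F : R⟦X⟧} (hF : F.IsOdd) (v : R⟦X⟧) : (v.substOddPow F).IsOdd := by
  intro n hn
  rw [coeff_substOddPow]
  apply Finset.sum_eq_zero
  intro i _
  rw [coeff_pow_odd_zero hF (2 * i + 1) n (hn.add_odd ⟨i, by ring⟩), mul_zero]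

lemma PowerSeries.InH.comp {F G : R⟦X⟧} (hF : F.InH) (hG : G.InH) : (F.comp G).InH :=
  ⟨by rw [constantCoeff_comp, hF.1], by rw [coeff_one_comp]; exact hF.2.mul hG.2⟩

lemma PowerSeries.InH.cancel {F : R⟦X⟧} (hF : F.InH) {a b : R⟦X⟧} (h : F * a = F * b) : a = b := by
  obtain ⟨h0, h1⟩ := hF
  obtain ⟨U, hU⟩ := X_dvd_iff.mpr h0
  have hc : coeff 1 F = constantCoeff U := by
    rw [hU, ← coeff_zero_eq_constantCoeff_apply]
    exact coeff_succ_X_mul 0 U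
  have hUunit : IsUnit U := by
    rw [PowerSeries.isUnit_iff_constantCoeff, ← hc]; exact h1
  have hX : (X : R⟦X⟧) * (U * a) = X * (U * b) := by
    rw [← mul_assoc, ← mul_assoc, ← hU]; exact h
  have hU2 : U * a = U * b := by
    ext n
    have h3 := congrArg (coeff (n + 1)) hX
    rwa [coeff_succ_X_mul, coeff_succ_X_mul] at h3
  obtain ⟨u, rfl⟩ := hUunit
  exact (Units.mul_right_inj u).mp hU2

lemma mul_substOddPow {v F : R⟦X⟧} (hv : v.IsEven) (hv0 : constantCoeff v = 0)
    (hF : constantCoeff F = 0) : F * v.substOddPow F = v.comp F := by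
  ext n
  rw [PowerSeries.coeff_mul, coeff_comp]
  have step1 : ∀ p ∈ antidiagonal n,
      coeff p.1 F * coeff p.2 (v.substOddPow F) =
        ∑ i ∈ range (n + 1),
          coeff (2 * i + 2) v * (coeff p.1 F * coeff p.2 (F ^ (2 * i + 1))) := by
    rintro ⟨a, b⟩ hab
    rw [Finset.HasAntidiagonal.mem_antidiagonal] at hab
    rw [coeff_substOddPow]
    have hpad : ∑ i ∈ range (b + 1), coeff (2 * i + 2) v * coeff b (F ^ (2 * i + 1)) =
        ∑ i ∈ range (n + 1), coeff (2 * i + 2) v * coeff b (F ^ (2 * i + 1)) := by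
      apply Finset.sum_subset (Finset.range_subset_range.mpr (by omega))
      intro x _ hx
      have : b < 2 * x + 1 := by
        have := Finset.mem_range.not.mp hx; omega
      rw [coeff_pow_of_lt hF this, mul_zero]
    rw [hpad, Finset.mul_sum]
    apply Finset.sum_congr rfl
    intro i _
    ring
  rw [Finset.sum_congr rfl step1, Finset.sum_comm]
  have step2 : ∀ i ∈ range (n + 1),
      ∑ p ∈ antidiagonal n,
          coeff (2 * i + 2) v * (coeff p.1 F * coeff p.2 (F ^ (2 * i + 1))) =
        coeff (2 * i + 2) v * coeff n (F ^ (2 * i + 2)) := by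
    intro i _
    rw [← Finset.mul_sum, ← PowerSeries.coeff_mul,
      show F * F ^ (2 * i + 1) = F ^ (2 * i + 2) from (pow_succ' F (2 * i + 1)).symm]
  rw [Finset.sum_congr rfl step2]
  have key : ∀ m : ℕ, ∑ k ∈ range (2 * m + 1), coeff k v * coeff n (F ^ k) =
      ∑ i ∈ range m, coeff (2 * i + 2) v * coeff n (F ^ (2 * i + 2)) := by
    intro m
    induction m with
    | zero =>
      rw [show 2 * 0 + 1 = 1 by norm_num, Finset.sum_range_one, Finset.range_zero,
        Finset.sum_empty, coeff_zero_eq_constantCoeff_apply, hv0, zero_mul]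
    | succ m ih =>
      rw [show 2 * (m + 1) + 1 = (2 * m + 1) + 1 + 1 by ring, Finset.sum_range_succ,
        Finset.sum_range_succ, ih, Finset.sum_range_succ,
        hv (2 * m + 1) ⟨m, by ring⟩, zero_mul, add_zero,
        show 2 * m + 1 + 1 = 2 * m + 2 by ring]
  rw [sum_coeff_ext hF (fun k => coeff k v) (show n < 2 * (n + 1) + 1 by omega),
    key (n + 1)]

lemma substOddPow_comp {v F₁ F₂ : R⟦X⟧} (hv : v.IsEven) (hv0 : constantCoeff v = 0)
    (h₁ : F₁.InH) (h₂ : F₂.InH) :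
    (v.substOddPow F₁).comp F₂ = v.substOddPow (F₁.comp F₂) := by
  have h12 : (F₁.comp F₂).InH := h₁.comp h₂
  apply h12.cancel
  rw [mul_substOddPow hv hv0 h12.1]
  calc F₁.comp F₂ * (v.substOddPow F₁).comp F₂
      = (F₁ * v.substOddPow F₁).comp F₂ := (comp_mul h₂.1 _ _).symm
    _ = (v.comp F₁).comp F₂ := by rw [mul_substOddPow hv hv0 h₁.1]
    _ = v.comp (F₁.comp F₂) := comp_assoc h₁.1 h₂.1 v

lemma constantCoeff_substOddPow (v : R⟦X⟧) {F : R⟦X⟧} (hF : constantCoeff F = 0) :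
    constantCoeff (v.substOddPow F) = 0 := by
  rw [← coeff_zero_eq_constantCoeff_apply, coeff_substOddPow]
  simp [coeff_zero_eq_constantCoeff_apply, hF]

lemma goodPair_act {p : R⟦X⟧ × R⟦X⟧} (hp : GoodPair p) {G F : R⟦X⟧} (hG : G.IsOdd)
    (hFo : F.IsOdd) (hF : F.InH) : GoodPair (MooreAct G F p) := by
  obtain ⟨hv, hv0, hw, hw0⟩ := hp
  have hS : (p.1.substOddPow F).IsOdd := substOddPow_isOdd hFo p.1
  have hG0 : coeff 0 G = 0 := hG 0 Even.zero
  refine ⟨?_, ?_, ?_, ?_⟩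
  · show (2 * X * G + X * p.1.substOddPow F).IsEven
    have h2 : 2 * X * G + X * p.1.substOddPow F =
        (X * G + X * G) + X * p.1.substOddPow F := by ring
    rw [h2]
    exact ((isOdd_X.mul_even hG).add (isOdd_X.mul_even hG)).add (isOdd_X.mul_even hS)
  · show constantCoeff (2 * X * G + X * p.1.substOddPow F) = 0
    simp [constantCoeff_X]
  · show (-(G * p.1.substOddPow F) + p.2.comp F - G ^ 2).IsEven
    exact ((hG.mul_even hS).neg.add (comp_even hw hFo)).sub hG.sq_even
  · show constantCoeff (-(G * p.1.substOddPow F) + p.2.comp F - G ^ 2) = 0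
    rw [map_sub, map_add, map_neg, map_mul, map_pow, constantCoeff_comp,
      ← coeff_zero_eq_constantCoeff_apply, hG0, hw0]
    ring

lemma mooreAct_id {p : R⟦X⟧ × R⟦X⟧} (hp : GoodPair p) : MooreAct 0 X p = p := by
  obtain ⟨hv, hv0, hw, hw0⟩ := hp
  have h1 : (X : R⟦X⟧) * p.1.substOddPow X = p.1 := by
    rw [mul_substOddPow hv hv0 constantCoeff_X, comp_X_right]
  have h2 : p.2.comp X = p.2 := comp_X_right p.2
  apply Prod.ext
  · show 2 * X * 0 + X * p.1.substOddPow X = p.1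
    rw [h1]; ring
  · show -(0 * p.1.substOddPow X) + p.2.comp X - 0 ^ 2 = p.2
    rw [h2]; ring

lemma mooreAct_comp {p : R⟦X⟧ × R⟦X⟧} (hp : GoodPair p) {G₁ F₁ G₂ F₂ : R⟦X⟧}
    (hG₁ : G₁.IsOdd) (hF₁o : F₁.IsOdd) (h₁ : F₁.InH) (h₂ : F₂.InH) :
    MooreAct G₂ F₂ (MooreAct G₁ F₁ p) = MooreAct (G₂ + G₁.comp F₂) (F₁.comp F₂) p := by
  obtain ⟨hv, hv0, hw, hw0⟩ := hp
  have hq : GoodPair (MooreAct G₁ F₁ p) := goodPair_act ⟨hv, hv0, hw, hw0⟩ hG₁ hF₁o h₁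
  have hS : (p.1.substOddPow F₁).IsOdd := substOddPow_isOdd hF₁o p.1
  have hKey : (2 * X * G₁ + X * p.1.substOddPow F₁).substOddPow F₂ =
      2 * G₁.comp F₂ + p.1.substOddPow (F₁.comp F₂) := by
    have hv₁ : (2 * X * G₁ + X * p.1.substOddPow F₁).IsEven := hq.1
    have hv₁0 : constantCoeff (2 * X * G₁ + X * p.1.substOddPow F₁) = 0 := hq.2.1
    apply h₂.cancel
    rw [mul_substOddPow hv₁ hv₁0 h₂.1]
    have expand : 2 * X * G₁ + X * p.1.substOddPow F₁ =
        (X * G₁ + X * G₁) + X * p.1.substOddPow F₁ := by ring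
    rw [expand, comp_add, comp_add, comp_mul h₂.1, comp_mul h₂.1,
      X_comp h₂.1, substOddPow_comp hv hv0 h₁ h₂]
    ring
  have hW : ((-(G₁ * p.1.substOddPow F₁) + p.2.comp F₁ - G₁ ^ 2).comp F₂) =
      -(G₁.comp F₂ * p.1.substOddPow (F₁.comp F₂)) + p.2.comp (F₁.comp F₂) -
        (G₁.comp F₂) ^ 2 := by
    rw [comp_sub, comp_add, comp_neg, comp_mul h₂.1, comp_pow h₂.1,
      comp_assoc h₁.1 h₂.1, substOddPow_comp hv hv0 h₁ h₂]
  simp only [MooreAct, Prod.mk.injEq]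
  constructor
  · rw [hKey]; ring
  · rw [hKey, hW]; ring

noncomputable def invCoeff (F : R⟦X⟧) (u : Rˣ) : ℕ → R
  | n => (↑u⁻¹ : R) ^ n * ((if n = 1 then 1 else 0) -
      ∑ k ∈ (Finset.range n).attach, invCoeff F u k * coeff n (F ^ (k : ℕ)))
  termination_by n => n
  decreasing_by exact Finset.mem_range.mp k.2

lemma invCoeff_eq (F : R⟦X⟧) (u : Rˣ) (n : ℕ) :
    invCoeff F u n = (↑u⁻¹ : R) ^ n * ((if n = 1 then 1 else 0) -
      ∑ k ∈ Finset.range n, invCoeff F u k * coeff n (F ^ k)) := by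
  rw [invCoeff, ← Finset.sum_attach (Finset.range n) (fun k => invCoeff F u k * coeff n (F ^ k))]

lemma invCoeff_zero (F : R⟦X⟧) (u : Rˣ) : invCoeff F u 0 = 0 := by
  rw [invCoeff_eq]; simp

lemma invCoeff_one (F : R⟦X⟧) (u : Rˣ) : invCoeff F u 1 = (↑u⁻¹ : R) := by
  rw [invCoeff_eq]
  simp [coeff_one]

lemma invCoeff_comp {F : R⟦X⟧} (hF0 : constantCoeff F = 0) {u : Rˣ}
    (hu : coeff 1 F = ↑u) : (mk (invCoeff F u)).comp F = X := by
  ext n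
  rw [coeff_comp, Finset.sum_range_succ]
  simp only [coeff_mk]
  rw [coeff_pow_self hF0 n, hu]
  rw [invCoeff_eq F u n, coeff_X]
  have h2 : (↑u⁻¹ : R) ^ n * (↑u : R) ^ n = 1 := by rw [← mul_pow, Units.inv_mul, one_pow]
  linear_combination ((if n = 1 then (1 : R) else 0) -
    ∑ k ∈ Finset.range n, invCoeff F u k * coeff n (F ^ k)) * h2

lemma invCoeff_even_zero {F : R⟦X⟧} (hFo : F.IsOdd) (u : Rˣ) :
    ∀ n : ℕ, Even n → invCoeff F u n = 0 := by
  intro n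
  induction n using Nat.strong_induction_on with
  | _ n ih =>
    intro hn
    rw [invCoeff_eq, if_neg (by rintro rfl; simp at hn)]
    have hsum : ∑ k ∈ Finset.range n, invCoeff F u k * coeff n (F ^ k) = 0 := by
      apply Finset.sum_eq_zero
      intro k hk
      rcases Nat.even_or_odd k with h | h
      · rw [ih k (Finset.mem_range.mp hk) h, zero_mul]
      · rw [coeff_pow_odd_zero hFo k n (hn.add_odd h), mul_zero]
    rw [hsum, sub_zero, mul_zero]

lemma invCoeff_isOdd {F : R⟦X⟧} (hFo : F.IsOdd) (u : Rˣ) : (mk (invCoeff F u)).IsOdd :=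
  fun n hn => by rw [coeff_mk, invCoeff_even_zero hFo u n hn]

lemma exists_right_inverse {F : R⟦X⟧} (hF : F.InH) :
    ∃ G : R⟦X⟧, G.InH ∧ G.comp F = X ∧ (F.IsOdd → G.IsOdd) := by
  obtain ⟨h0, h1⟩ := hF
  refine ⟨mk (invCoeff F h1.unit), ⟨?_, ?_⟩, invCoeff_comp h0 h1.unit_spec.symm, ?_⟩
  · rw [← coeff_zero_eq_constantCoeff_apply, coeff_mk, invCoeff_zero]
  · rw [coeff_mk, invCoeff_one]
    exact (h1.unit⁻¹).isUnit
  · exact fun hFo => invCoeff_isOdd hFo h1.unit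

lemma exists_inverse {F : R⟦X⟧} (hFo : F.IsOdd) (hF : F.InH) :
    ∃ Fi : R⟦X⟧, Fi.IsOdd ∧ Fi.InH ∧ F.comp Fi = X ∧ Fi.comp F = X := by
  obtain ⟨G, hGH, hGF, hGodd⟩ := exists_right_inverse hF
  obtain ⟨H, hHH, hHG, -⟩ := exists_right_inverse hGH
  have hHF : H = F := by
    have h1 : (H.comp G).comp F = H.comp (G.comp F) := comp_assoc hGH.1 hF.1 H
    rw [hHG, hGF, X_comp hF.1, comp_X_right] at h1
    exact h1.symm
  exact ⟨G, hGodd hFo, hGH, hHF ▸ hHG, hGF⟩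

lemma PowerSeries.IsOdd.add {a b : R⟦X⟧} (ha : a.IsOdd) (hb : b.IsOdd) : (a + b).IsOdd :=
  fun n hn => by rw [map_add, ha n hn, hb n hn, add_zero]

/-- The transformations `T_{(G,F)}` generate an equivalence relation directly: `∼` is
reflexive (via `(G,F) = (0,t)`), symmetric and transitive on pairs of even power series with
zero constant coefficient, and each `T_{(G,F)}` preserves such pairs. -/
theorem mooreRel_equivalence (R : Type*) [CommRing R] :
    (∀ p : R⟦X⟧ × R⟦X⟧, GoodPair p → ∀ G F : R⟦X⟧, G.IsOdd → F.IsOdd → F.InH →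
      GoodPair (MooreAct G F p)) ∧
    (∀ p : R⟦X⟧ × R⟦X⟧, GoodPair p →
      MooreAct 0 PowerSeries.X p = p ∧ MooreRel p p) ∧
    (∀ p q : R⟦X⟧ × R⟦X⟧, GoodPair p → GoodPair q → MooreRel p q → MooreRel q p) ∧
    (∀ p q r : R⟦X⟧ × R⟦X⟧, GoodPair p → GoodPair q → GoodPair r →
      MooreRel p q → MooreRel q r → MooreRel p r) := by
  have hXH : (X : R⟦X⟧).InH :=
    ⟨constantCoeff_X, by rw [coeff_X, if_pos rfl]; exact isUnit_one⟩
  refine ⟨fun p hp G F hG hFo hF => goodPair_act hp hG hFo hF,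
    fun p hp => ⟨mooreAct_id hp, 0, X, isOdd_zero, isOdd_X, hXH, (mooreAct_id hp).symm⟩,
    ?_, ?_⟩
  · rintro p q hp hq ⟨G, F, hG, hFo, hF, rfl⟩
    obtain ⟨Fi, hFio, hFiH, hFFi, hFiF⟩ := exists_inverse hFo hF
    refine ⟨-(G.comp Fi), Fi, (comp_odd hG hFio).neg, hFio, hFiH, ?_⟩
    rw [mooreAct_comp hp hG hFo hF hFiH, neg_add_cancel, hFFi]
    exact (mooreAct_id hp).symm
  · rintro p q r hp hq hr ⟨G₁, F₁, hG₁, hF₁o, hF₁, rfl⟩ ⟨G₂, F₂, hG₂, hF₂o, hF₂, rfl⟩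
    exact ⟨G₂ + G₁.comp F₂, F₁.comp F₂, hG₂.add (comp_odd hG₁ hF₂o),
      comp_odd hF₁o hF₂o, hF₁.comp hF₂, mooreAct_comp hp hG₁ hF₁o hF₁ hF₂⟩
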